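/- Let W ∈ C²(ℝ^{d×d}; ℝ) with S = DW, p ≥ 2, and suppose there exist constants C > 0, R > 0 such that (S(F₁) - S(F₂)) : (F₁ - F₂) ≥ C(|F₁|^{p-2} + |F₂|^{p-2})|F₁ - F₂|² whenever |F₁|, |F₂| ≥ R. Then there exist constants C' > 0 and K > 0 such that for ALL F₁, F₂ ∈ ℝ^{d×d}, (S(F₁) - S(F₂)) : (F₁ - F₂) ≥ (C'(|F₁|^{p-2} + |F₂|^{p-2}) - K)|F₁ - F₂|². -/

import Mathlib

open Metric

set_option maxHeartbeats 1000000

lemma aux_key {E : Type*} [NormedAddCommGroup E] [InnerProductSpace ℝ E]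
    (S : E → E) (p C R L : ℝ) (hp : 2 ≤ p) (hC : 0 < C) (hR : 0 < R) (hL : 0 ≤ L)
    (hLip : ∀ x ∈ closedBall (0:E) (2*R), ∀ y ∈ closedBall (0:E) (2*R),
       ‖S x - S y‖ ≤ L * ‖x - y‖)
    (h : ∀ F₁ F₂ : E, R ≤ ‖F₁‖ → R ≤ ‖F₂‖ →
      (inner ℝ (S F₁ - S F₂) (F₁ - F₂) : ℝ) ≥
        C * (‖F₁‖ ^ (p - 2) + ‖F₂‖ ^ (p - 2)) * ‖F₁ - F₂‖ ^ 2)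
    (F₁ F₂ : E) (h1 : ‖F₁‖ ≤ R) (h2 : 2*R ≤ ‖F₂‖) :
    (inner ℝ (S F₁ - S F₂) (F₁ - F₂) : ℝ) ≥
      ((C/3) * (‖F₁‖ ^ (p - 2) + ‖F₂‖ ^ (p - 2)) - (L + (C/3) * R ^ (p - 2)))
        * ‖F₁ - F₂‖ ^ 2 := by
  set f : ℝ → ℝ := fun t => ‖F₂ + t • (F₁ - F₂)‖ with hf
  have hfc : Continuous f := (continuous_const.add (continuous_id.smul continuous_const)).norm
  have hf0 : f 0 = ‖F₂‖ := by simp [hf]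
  have hf1 : f 1 = ‖F₁‖ := by simp [hf]
  have hmem : R ∈ Set.Icc (f 1) (f 0) := by
    rw [hf0, hf1]; constructor <;> linarith
  obtain ⟨t, ht01, htR⟩ := intermediate_value_Icc' (by norm_num : (0:ℝ) ≤ 1)
    hfc.continuousOn hmem
  set G := F₂ + t • (F₁ - F₂) with hG
  have hGnorm : ‖G‖ = R := htR
  have ht0 : 0 < t := by
    rcases lt_or_eq_of_le ht01.1 with h' | h'
    · exact h'
    · exfalso; rw [← h'] at htR; simp [hf] at htR; rw [htR] at h2; linarith
  have hGF₂ : G - F₂ = t • (F₁ - F₂) := by simp [hG]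
  have hnormGF₂ : ‖G - F₂‖ = t * ‖F₁ - F₂‖ := by
    rw [hGF₂, norm_smul, Real.norm_eq_abs, abs_of_pos ht0]
  have hs : 0 < ‖F₁ - F₂‖ := by
    have : F₁ ≠ F₂ := by intro hE; rw [hE] at h1; linarith
    simpa [sub_ne_zero] using this
  have ht3 : 1/3 ≤ t := by
    have hlow : ‖F₂‖ - R ≤ t * ‖F₁ - F₂‖ := by
      rw [← hnormGF₂, ← hGnorm]
      calc ‖F₂‖ - ‖G‖ ≤ ‖F₂ - G‖ := norm_sub_norm_le _ _
        _ = ‖G - F₂‖ := norm_sub_rev _ _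
    have hub : ‖F₁ - F₂‖ ≤ R + ‖F₂‖ := (norm_sub_le _ _).trans (by linarith)
    nlinarith [mul_le_mul_of_nonneg_left hub ht0.le]
  have hmono := h G F₂ (le_of_eq hGnorm.symm) (by linarith)
  rw [hGnorm] at hmono
  -- inner ℝ (S G - S F₂) (F₁ - F₂) bound
  have hinner1 : (inner ℝ (S G - S F₂) (F₁ - F₂) : ℝ) ≥
      C * (R ^ (p-2) + ‖F₂‖ ^ (p-2)) * t * ‖F₁ - F₂‖ ^ 2 := by
    have e1 : (inner ℝ (S G - S F₂) (G - F₂) : ℝ)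
        = t * inner ℝ (S G - S F₂) (F₁ - F₂) := by
      rw [hGF₂, real_inner_smul_right]
    rw [e1, hnormGF₂] at hmono
    have hBnn : 0 ≤ C * (R ^ (p-2) + ‖F₂‖ ^ (p-2)) := by
      have := Real.rpow_nonneg hR.le (p-2)
      have := Real.rpow_nonneg (norm_nonneg F₂) (p-2)
      nlinarith
    nlinarith [hmono, sq_nonneg ‖F₁ - F₂‖]
  have hB3 : (inner ℝ (S G - S F₂) (F₁ - F₂) : ℝ) ≥
      (C/3) * (R ^ (p-2) + ‖F₂‖ ^ (p-2)) * ‖F₁ - F₂‖ ^ 2 := by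
    have hBnn : 0 ≤ C * (R ^ (p-2) + ‖F₂‖ ^ (p-2)) := by
      have := Real.rpow_nonneg hR.le (p-2)
      have := Real.rpow_nonneg (norm_nonneg F₂) (p-2)
      nlinarith
    nlinarith [hinner1, mul_le_mul_of_nonneg_right
      (mul_le_mul_of_nonneg_left ht3 hBnn) (sq_nonneg ‖F₁ - F₂‖)]
  -- Lipschitz part
  have hF₁b : F₁ ∈ closedBall (0:E) (2*R) := by
    rw [mem_closedBall, dist_zero_right]; linarith
  have hGb : G ∈ closedBall (0:E) (2*R) := by
    rw [mem_closedBall, dist_zero_right, hGnorm]; linarith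
  have hF₁G : ‖F₁ - G‖ ≤ ‖F₁ - F₂‖ := by
    have e : F₁ - G = (1 - t) • (F₁ - F₂) := by
      rw [hG, sub_smul, one_smul]; abel
    rw [e, norm_smul, Real.norm_eq_abs, abs_of_nonneg (by linarith [ht01.2])]
    nlinarith [ht01.2]
  have hlip2 : ‖S F₁ - S G‖ ≤ L * ‖F₁ - F₂‖ :=
    (hLip F₁ hF₁b G hGb).trans (mul_le_mul_of_nonneg_left hF₁G hL)
  have hcs : (inner ℝ (S F₁ - S G) (F₁ - F₂) : ℝ) ≥ -(L * ‖F₁ - F₂‖ ^ 2) := by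
    have h1' : -(‖S F₁ - S G‖ * ‖F₁ - F₂‖) ≤ (inner ℝ (S F₁ - S G) (F₁ - F₂) : ℝ) :=
      (abs_le.mp (abs_real_inner_le_norm _ _)).1
    have h2' : ‖S F₁ - S G‖ * ‖F₁ - F₂‖ ≤ (L * ‖F₁ - F₂‖) * ‖F₁ - F₂‖ :=
      mul_le_mul_of_nonneg_right hlip2 (norm_nonneg _)
    have h3' : -(L * ‖F₁ - F₂‖ ^ 2) ≤ -(‖S F₁ - S G‖ * ‖F₁ - F₂‖) := by nlinarith
    linarith
  have hsplit : (inner ℝ (S F₁ - S F₂) (F₁ - F₂) : ℝ)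
      = inner ℝ (S F₁ - S G) (F₁ - F₂) + inner ℝ (S G - S F₂) (F₁ - F₂) := by
    rw [← inner_add_left]
    norm_num
  have hF₁p : ‖F₁‖ ^ (p-2) ≤ R ^ (p-2) :=
    Real.rpow_le_rpow (norm_nonneg _) h1 (by linarith)
  rw [hsplit]
  have hd : C/3 * (‖F₁‖ ^ (p-2) * ‖F₁ - F₂‖ ^ 2) ≤ C/3 * (R ^ (p-2) * ‖F₁ - F₂‖ ^ 2) :=
    mul_le_mul_of_nonneg_left
      (mul_le_mul_of_nonneg_right hF₁p (sq_nonneg ‖F₁ - F₂‖)) (by linarith)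
  have hrho : 0 ≤ C/3 * (R ^ (p-2) * ‖F₁ - F₂‖ ^ 2) :=
    mul_nonneg (by linarith)
      (mul_nonneg (Real.rpow_nonneg hR.le (p-2)) (sq_nonneg ‖F₁ - F₂‖))
  nlinarith [hB3, hcs, hd, hrho]

/-- (AB′) outside a ball implies the global strengthened Andrews–Ball condition (A4′). -/
theorem stmt1 (d : ℕ) (p : ℝ) (hp : 2 ≤ p)
    (W : EuclideanSpace ℝ (Fin d × Fin d) → ℝ) (hW : ContDiff ℝ 2 W)
    (C R : ℝ) (hC : 0 < C) (hR : 0 < R)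
    (h : ∀ F₁ F₂ : EuclideanSpace ℝ (Fin d × Fin d), R ≤ ‖F₁‖ → R ≤ ‖F₂‖ →
      (inner ℝ (gradient W F₁ - gradient W F₂) (F₁ - F₂) : ℝ) ≥
        C * (‖F₁‖ ^ (p - 2) + ‖F₂‖ ^ (p - 2)) * ‖F₁ - F₂‖ ^ 2) :
    ∃ C' K : ℝ, 0 < C' ∧ 0 < K ∧
      ∀ F₁ F₂ : EuclideanSpace ℝ (Fin d × Fin d),
        (inner ℝ (gradient W F₁ - gradient W F₂) (F₁ - F₂) : ℝ) ≥
          (C' * (‖F₁‖ ^ (p - 2) + ‖F₂‖ ^ (p - 2)) - K) * ‖F₁ - F₂‖ ^ 2 := by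
  set S := gradient W with hSdef
  -- S is C¹
  have hS1 : ContDiff ℝ 1 S := by
    have h1 : ContDiff ℝ 1 (fderiv ℝ W) := hW.fderiv_right (by norm_num)
    exact ((InnerProductSpace.toDual ℝ (EuclideanSpace ℝ (Fin d × Fin d))).symm.contDiff).comp h1
  -- bound on fderiv of S on the closed ball
  have hdS : Continuous (fderiv ℝ S) :=
    (hS1.fderiv_right (m := 0) (by norm_num)).continuous
  obtain ⟨L₀, hL₀⟩ := (isCompact_closedBall (0 : EuclideanSpace ℝ (Fin d × Fin d)) (2*R)).exists_bound_of_continuousOn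
    hdS.continuousOn
  set L : ℝ := max L₀ 0 with hLdef
  have hL : 0 ≤ L := le_max_right _ _
  have hLip : ∀ x ∈ closedBall (0 : EuclideanSpace ℝ (Fin d × Fin d)) (2*R), ∀ y ∈ closedBall (0 : EuclideanSpace ℝ (Fin d × Fin d)) (2*R),
      ‖S x - S y‖ ≤ L * ‖x - y‖ := by
    intro x hx y hy
    have := (convex_closedBall (0 : EuclideanSpace ℝ (Fin d × Fin d)) (2*R)).norm_image_sub_le_of_norm_fderiv_le
      (fun z _ => (hS1.differentiable (by norm_num)).differentiableAt)
      (fun z hz => (hL₀ z hz).trans (le_max_left L₀ 0)) hy hx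
    exact this
  -- constants
  set C' : ℝ := C/3 with hC'def
  have hC' : 0 < C' := by rw [hC'def]; linarith
  have hRp : 0 ≤ R ^ (p-2) := Real.rpow_nonneg hR.le _
  have h2Rp : 0 ≤ (2*R) ^ (p-2) := Real.rpow_nonneg (by linarith) _
  refine ⟨C', L + C' * R ^ (p-2) + 2 * C' * (2*R) ^ (p-2) + 1, hC', by nlinarith, ?_⟩
  set K : ℝ := L + C' * R ^ (p-2) + 2 * C' * (2*R) ^ (p-2) + 1 with hKdef
  -- case both in the ball of radius 2R
  have hboth : ∀ F₁ F₂ : EuclideanSpace ℝ (Fin d × Fin d), ‖F₁‖ ≤ 2*R → ‖F₂‖ ≤ 2*R →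
      (inner ℝ (S F₁ - S F₂) (F₁ - F₂) : ℝ) ≥
        (C' * (‖F₁‖ ^ (p - 2) + ‖F₂‖ ^ (p - 2)) - K) * ‖F₁ - F₂‖ ^ 2 := by
    intro F₁ F₂ hb1 hb2
    have hF₁b : F₁ ∈ closedBall (0 : EuclideanSpace ℝ (Fin d × Fin d)) (2*R) := by
      rw [mem_closedBall, dist_zero_right]; linarith
    have hF₂b : F₂ ∈ closedBall (0 : EuclideanSpace ℝ (Fin d × Fin d)) (2*R) := by
      rw [mem_closedBall, dist_zero_right]; linarith
    have hlip2 : ‖S F₁ - S F₂‖ ≤ L * ‖F₁ - F₂‖ := hLip F₁ hF₁b F₂ hF₂b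
    have hcs : (inner ℝ (S F₁ - S F₂) (F₁ - F₂) : ℝ) ≥ -(L * ‖F₁ - F₂‖ ^ 2) := by
      have h1' := abs_real_inner_le_norm (S F₁ - S F₂) (F₁ - F₂)
      have h2' := neg_abs_le (inner ℝ (S F₁ - S F₂) (F₁ - F₂) : ℝ)
      nlinarith [norm_nonneg (F₁ - F₂)]
    have ha : ‖F₁‖ ^ (p-2) ≤ (2*R) ^ (p-2) :=
      Real.rpow_le_rpow (norm_nonneg _) hb1 (by linarith)
    have hb : ‖F₂‖ ^ (p-2) ≤ (2*R) ^ (p-2) :=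
      Real.rpow_le_rpow (norm_nonneg _) hb2 (by linarith)
    have hab : C' * (‖F₁‖ ^ (p-2) + ‖F₂‖ ^ (p-2)) - K ≤ -L := by
      have h1'' := mul_le_mul_of_nonneg_left ha hC'.le
      have h2'' := mul_le_mul_of_nonneg_left hb hC'.le
      have h3'' : 0 ≤ C' * R ^ (p-2) := mul_nonneg hC'.le hRp
      rw [hKdef]; nlinarith
    have hmul := mul_le_mul_of_nonneg_right hab (sq_nonneg ‖F₁ - F₂‖)
    nlinarith [hcs, hmul]
  have hKaux : ∀ F₁ F₂ : EuclideanSpace ℝ (Fin d × Fin d),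
      (inner ℝ (S F₁ - S F₂) (F₁ - F₂) : ℝ) ≥
        ((C/3) * (‖F₁‖ ^ (p - 2) + ‖F₂‖ ^ (p - 2)) - (L + (C/3) * R ^ (p - 2)))
          * ‖F₁ - F₂‖ ^ 2 →
      (inner ℝ (S F₁ - S F₂) (F₁ - F₂) : ℝ) ≥
        (C' * (‖F₁‖ ^ (p - 2) + ‖F₂‖ ^ (p - 2)) - K) * ‖F₁ - F₂‖ ^ 2 := by
    intro F₁ F₂ hh
    have : (C' * (‖F₁‖ ^ (p - 2) + ‖F₂‖ ^ (p - 2)) - K)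
        ≤ (C/3) * (‖F₁‖ ^ (p - 2) + ‖F₂‖ ^ (p - 2)) - (L + (C/3) * R ^ (p - 2)) := by
      rw [hKdef, hC'def]; nlinarith
    nlinarith [sq_nonneg ‖F₁ - F₂‖, mul_le_mul_of_nonneg_right this (sq_nonneg ‖F₁ - F₂‖)]
  intro F₁ F₂
  by_cases hc1 : R ≤ ‖F₁‖
  · by_cases hc2 : R ≤ ‖F₂‖
    · have := h F₁ F₂ hc1 hc2
      have hnn : 0 ≤ ‖F₁‖ ^ (p-2) + ‖F₂‖ ^ (p-2) := by
        have := Real.rpow_nonneg (norm_nonneg F₁) (p-2)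
        have := Real.rpow_nonneg (norm_nonneg F₂) (p-2)
        linarith
      have hK0 : (0:ℝ) < K := by rw [hKdef]; nlinarith
      nlinarith [sq_nonneg ‖F₁ - F₂‖, mul_nonneg hnn (sq_nonneg ‖F₁ - F₂‖)]
    · push_neg at hc2
      by_cases hc3 : 2*R ≤ ‖F₁‖
      · have hkey := aux_key S p C R L hp hC hR hL hLip h F₂ F₁ hc2.le hc3
        have hsym : (inner ℝ (S F₂ - S F₁) (F₂ - F₁) : ℝ)
            = inner ℝ (S F₁ - S F₂) (F₁ - F₂) := by
          rw [← neg_sub (S F₁) (S F₂), ← neg_sub F₁ F₂, inner_neg_neg]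
        rw [hsym] at hkey
        rw [norm_sub_rev F₂ F₁] at hkey
        apply hKaux
        calc ((C/3) * (‖F₁‖ ^ (p - 2) + ‖F₂‖ ^ (p - 2)) - (L + (C/3) * R ^ (p - 2)))
              * ‖F₁ - F₂‖ ^ 2
            = ((C/3) * (‖F₂‖ ^ (p - 2) + ‖F₁‖ ^ (p - 2)) - (L + (C/3) * R ^ (p - 2)))
              * ‖F₁ - F₂‖ ^ 2 := by ring
          _ ≤ inner ℝ (S F₁ - S F₂) (F₁ - F₂) := hkey
      · push_neg at hc3
        exact hboth F₁ F₂ hc3.le (by linarith)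
  · push_neg at hc1
    by_cases hc3 : 2*R ≤ ‖F₂‖
    · exact hKaux F₁ F₂ (aux_key S p C R L hp hC hR hL hLip h F₁ F₂ hc1.le hc3)
    · push_neg at hc3
      exact hboth F₁ F₂ (by linarith) hc3.le
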